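/- Let Λ₀ ⊆ C̄ be a countable set of states such that λ ∈ Λ₀, s ∈ S and λ + s ∈ C̄ imply λ + s ∈ Λ₀, and fix λ₀ ∈ Λ₀ such that every λ ∈ Λ₀ can be reached from λ₀ by a finite path λ₀ = π_0, π_1, …, π_n = λ with all π_k ∈ C̄ and all increments π_{k+1} − π_k ∈ S. Assume: (i) there exist κ₁, κ₂ > 0 and V : Λ₀ → ℝ_{>0} with ψ_n(λ) · n^{κ₂} → κ₁ V(λ) as n → ∞ for every λ ∈ Λ₀; (ii) there is a function D₀ : Λ₀ → ℝ_{>0} with D₀(λ₀) = 1, harmonic for the killed kernel (D₀(λ) = ∑_{s ∈ S, λ+s ∈ C̄} ν({s}) D₀(λ+s) for all λ ∈ Λ₀), and satisfying ψ_n(λ) ≤ D₀(λ) ψ_n(λ₀) for all λ ∈ Λ₀ and n ≥ 1. Then for every λ ∈ Λ₀, ψ_n(λ)/ψ_n(λ₀) → D₀(λ), and for every λ, Λ ∈ Λ₀ with Λ − λ ∈ S, the conditioned transition probabilities converge: ℙ(λ + X_1 = Λ and τ_λ > n)/ℙ(τ_λ > n) → ν({Λ − λ}) · D₀(Λ)/D₀(λ)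 as n → ∞. -/

import Mathlib

open MeasureTheory ProbabilityTheory Filter

set_option linter.unusedSectionVars false
set_option maxHeartbeats 1000000
open MeasureTheory ProbabilityTheory Filter

section Aux
variable {Ω E : Type*} [MeasurableSpace Ω] [MeasurableSpace E]

noncomputable def sumsF {G : Type*} [AddCommMonoid G] [DecidableEq G] (S : Finset G) : ℕ → Finset G
  | 0 => {0}
  | n + 1 => Finset.image₂ (· + ·) S (sumsF S n)

lemma mem_sumsF {G : Type*} [AddCommMonoid G] [DecidableEq G] (S : Finset G) (f : ℕ → G)
    (hf : ∀ j, f j ∈ S) : ∀ k, (∑ j ∈ Finset.range k, f j) ∈ sumsF S k := by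
  intro k
  induction k with
  | zero => simp [sumsF]
  | succ n ih =>
    rw [Finset.sum_range_succ, add_comm (∑ j ∈ Finset.range n, f j) (f n)]
    show f n + _ ∈ Finset.image₂ (· + ·) S (sumsF S n)
    exact Finset.mem_image₂_of_mem (hf n) ih

def Mset {G : Type*} [AddCommMonoid G] [DecidableEq G] (S : Finset G) : Set G :=
  ⋃ k, ↑(sumsF S k)

def EsetA {G : Type*} [AddCommMonoid G] [DecidableEq G] (S : Finset G) (C : Set G) (lam : G) :
    Set G := {v | v ∈ Mset S ∧ lam + v ∈ C}

def PSetA {G : Type*} [AddCommMonoid G] [DecidableEq G] (S : Finset G) (C : Set G) (lam : G)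
    (m : ℕ) : Set (Fin m → G) :=
  {x | ∀ k, 1 ≤ k → k ≤ m →
    (∑ i ∈ Finset.univ.filter (fun i : Fin m => (i:ℕ) < k), x i) ∈ EsetA S C lam}

variable [AddCommGroup E] [MeasurableSingletonClass E] [DecidableEq E] [MeasurableAdd₂ E]

lemma EsetA_measurable (S : Finset E) (C : Set E) (lam : E) : MeasurableSet (EsetA S C lam) := by
  have hM : (Mset S).Countable := Set.countable_iUnion fun k => (sumsF S k).countable_toSet
  exact ((hM.mono (fun v hv => hv.1 : EsetA S C lam ⊆ Mset S)).measurableSet)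

lemma PSetA_measurable (S : Finset E) (C : Set E) (lam : E) (m : ℕ) :
    MeasurableSet (PSetA S C lam m) := by
  have : PSetA S C lam m = ⋂ k ∈ Set.Icc 1 m,
      (fun x : Fin m → E => ∑ i ∈ Finset.univ.filter (fun i : Fin m => (i:ℕ) < k), x i) ⁻¹'
        EsetA S C lam := by
    ext x
    simp only [PSetA, Set.mem_setOf_eq, Set.mem_iInter, Set.mem_Icc, Set.mem_preimage,
      and_imp]
  rw [this]
  refine MeasurableSet.biInter (Set.to_countable _) fun k _ => ?_
  exact (Finset.measurable_sum _ fun i _ => measurable_pi_apply i) (EsetA_measurable S C lam)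

lemma sum_filter_fin {G : Type*} [AddCommMonoid G] (m k : ℕ) (hk : k ≤ m) (f : ℕ → G) :
    ∑ i ∈ Finset.univ.filter (fun i : Fin m => (i:ℕ) < k), f i = ∑ j ∈ Finset.range k, f j := by
  rw [Finset.sum_filter, Fin.sum_univ_eq_sum_range (fun j => if j < k then f j else 0) m,
    ← Finset.sum_filter]
  apply Finset.sum_congr _ (fun _ _ => rfl)
  ext j; simp only [Finset.mem_filter, Finset.mem_range]; omega

lemma preimage_PSetA (S : Finset E) (C : Set E) (X : ℕ → Ω → E) (a m : ℕ) (lam : E) :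
    (fun ω (i : Fin m) => X (a + i) ω) ⁻¹' PSetA S C lam m
      = {ω | ∀ k, 1 ≤ k → k ≤ m → (∑ j ∈ Finset.range k, X (a + j) ω) ∈ EsetA S C lam} := by
  ext ω
  simp only [Set.mem_preimage, PSetA, Set.mem_setOf_eq]
  constructor
  · intro h k h1 h2
    have := h k h1 h2
    rwa [sum_filter_fin m k h2 (fun j => X (a + j) ω)] at this
  · intro h k h1 h2
    rw [sum_filter_fin m k h2 (fun j => X (a + j) ω)]
    exact h k h1 h2

lemma helper_measure (P : Measure Ω) {G U V : Set Ω} (hG : P Gᶜ = 0) (h : U ∩ G = V ∩ G) :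
    P U = P V := by
  apply measure_congr
  have h1 : U \ V ⊆ Gᶜ := by
    intro x hx hxG
    have : x ∈ V ∩ G := h ▸ ⟨hx.1, hxG⟩
    exact hx.2 this.1
  have h2 : V \ U ⊆ Gᶜ := by
    intro x hx hxG
    have : x ∈ U ∩ G := h.symm ▸ ⟨hx.1, hxG⟩
    exact hx.2 this.1
  rw [MeasureTheory.ae_eq_set]
  exact ⟨measure_mono_null h1 hG, measure_mono_null h2 hG⟩

variable (P : Measure Ω) [IsProbabilityMeasure P] (ν : Measure E) [IsProbabilityMeasure ν]
  (S : Finset E) (C : Set E) (X : ℕ → Ω → E)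

lemma good_null (hXmeas : ∀ k, Measurable (X k)) (hXdist : ∀ k, Measure.map (X k) P = ν)
    (hνS : ν (S : Set E) = 1) : P (⋂ j, X j ⁻¹' (S : Set E))ᶜ = 0 := by
  rw [Set.compl_iInter]
  refine measure_iUnion_null fun j => ?_
  rw [← Set.preimage_compl, ← Measure.map_apply (hXmeas j) S.finite_toSet.measurableSet.compl,
    hXdist j, measure_compl S.finite_toSet.measurableSet (measure_ne_top _ _), hνS,
    measure_univ]
  simp

lemma A_inter_good (a m : ℕ) (lam : E) :
    {ω | ∀ k, 1 ≤ k → k ≤ m → lam + (∑ j ∈ Finset.range k, X (a + j) ω) ∈ C}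
        ∩ (⋂ j, X j ⁻¹' (S : Set E))
      = {ω | ∀ k, 1 ≤ k → k ≤ m → (∑ j ∈ Finset.range k, X (a + j) ω) ∈ EsetA S C lam}
        ∩ (⋂ j, X j ⁻¹' (S : Set E)) := by
  ext ω
  simp only [Set.mem_inter_iff, Set.mem_setOf_eq, Set.mem_iInter, Set.mem_preimage]
  constructor
  · rintro ⟨h, hg⟩
    refine ⟨fun k h1 h2 => ⟨?_, h k h1 h2⟩, hg⟩
    exact Set.mem_iUnion.2 ⟨k, mem_sumsF S (fun j => X (a + j) ω) (fun j => hg (a + j)) k⟩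
  · rintro ⟨h, hg⟩
    exact ⟨fun k h1 h2 => (h k h1 h2).2, hg⟩



-- law of tuples
lemma aux_law (hXmeas : ∀ k, Measurable (X k))
    (hXindep : iIndepFun X P)
    (hXdist : ∀ k, Measure.map (X k) P = ν) (a m : ℕ) :
    Measure.map (fun ω (i : Fin m) => X (a + i) ω) P = Measure.pi (fun _ => ν) := by
  classical
  have hT : Measurable (fun ω (i : Fin m) => X (a + i) ω) :=
    measurable_pi_lambda _ fun i => hXmeas _
  refine (Measure.pi_eq fun s hs => ?_).symm
  rw [Measure.map_apply hT (MeasurableSet.univ_pi hs)]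
  set sets : ℕ → Set E := fun j => if h : j - a < m ∧ a ≤ j then s ⟨j - a, h.1⟩ else Set.univ
    with hsets
  have key : ∀ i : Fin m, sets (a + i) = s i := by
    intro i
    have h1 : a + (i : ℕ) - a = (i : ℕ) := by omega
    have h2 : a + (i:ℕ) - a < m ∧ a ≤ a + (i:ℕ) := by constructor <;> omega
    have h3 : (⟨a + (i:ℕ) - a, h2.1⟩ : Fin m) = i := Fin.ext h1
    simp only [hsets, dif_pos h2, h3]
  have hmeas : ∀ j, j ∈ Finset.image (fun i : Fin m => a + (i:ℕ)) Finset.univ →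
      MeasurableSet (sets j) := by
    intro j _
    simp only [hsets]
    split
    · exact hs _
    · exact MeasurableSet.univ
  have h := hXindep.measure_inter_preimage_eq_mul
    (Finset.image (fun i : Fin m => a + (i:ℕ)) Finset.univ) hmeas
  have hset : (fun ω (i : Fin m) => X (a + i) ω) ⁻¹' Set.pi Set.univ s
      = ⋂ j ∈ Finset.image (fun i : Fin m => a + (i:ℕ)) Finset.univ, X j ⁻¹' sets j := by
    ext ω
    simp only [Set.mem_preimage, Set.mem_pi, Set.mem_univ, true_implies, Set.mem_iInter,
      Finset.mem_image, Finset.mem_univ, true_and]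
    constructor
    · rintro h j ⟨i, rfl⟩
      rw [key i]; exact h i
    · intro h i
      have := h (a + i) ⟨i, rfl⟩
      rwa [key i] at this
  rw [hset, h, Finset.prod_image (fun i _ j _ hij => Fin.ext (by omega))]
  apply Finset.prod_congr rfl
  intro i _
  rw [key i, ← hXdist (a + i), Measure.map_apply (hXmeas _) (hs i)]

lemma aux_indep (hXmeas : ∀ k, Measurable (X k))
    (hXindep : iIndepFun X P) (n : ℕ) :
    IndepFun (X 0) (fun ω (i : Fin n) => X (1 + i) ω) P := by
  classical
  set T : Finset ℕ := Finset.image (fun i : Fin n => 1 + (i:ℕ)) Finset.univ with hT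
  have hdisj : Disjoint ({0} : Finset ℕ) T := by
    simp only [Finset.disjoint_left, Finset.mem_singleton, hT, Finset.mem_image]
    rintro x rfl ⟨i, _, h⟩
    omega
  have h := hXindep.indepFun_finset {0} T hdisj hXmeas
  have h2 := h.comp (φ := fun y : ({x // x ∈ ({0} : Finset ℕ)}) → E => y ⟨0, by simp⟩)
    (ψ := fun y : ({x // x ∈ T}) → E => fun i : Fin n =>
      y ⟨1 + (i:ℕ), by simp [hT]⟩)
    (_mγ := inferInstance) (_mγ' := inferInstance)
    (measurable_pi_apply _) (measurable_pi_lambda _ fun i => measurable_pi_apply _)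
  exact h2

lemma L_A_eq (hXmeas : ∀ k, Measurable (X k))
    (hXindep : iIndepFun X P)
    (hXdist : ∀ k, Measure.map (X k) P = ν) (hνS : ν (S : Set E) = 1)
    (a m : ℕ) (lam : E) :
    P {ω | ∀ k, 1 ≤ k → k ≤ m → lam + (∑ j ∈ Finset.range k, X (a + j) ω) ∈ C}
      = Measure.pi (fun _ : Fin m => ν) (PSetA S C lam m) := by
  have h1 := helper_measure P (good_null P ν S X hXmeas hXdist hνS)
    (A_inter_good S C X a m lam)
  rw [h1, ← preimage_PSetA S C X a m lam,
    ← Measure.map_apply (measurable_pi_lambda _ fun i => hXmeas _) (PSetA_measurable S C lam m),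
    aux_law P ν X hXmeas hXindep hXdist a m]

lemma L_step_pos (hXmeas : ∀ k, Measurable (X k))
    (hXindep : iIndepFun X P)
    (hXdist : ∀ k, Measure.map (X k) P = ν) (hνS : ν (S : Set E) = 1)
    (lam s : E) (n : ℕ) (h : lam + s ∈ C) :
    P ({ω | X 0 ω = s} ∩
        {ω | ∀ k, 1 ≤ k → k ≤ n + 1 → lam + (∑ j ∈ Finset.range k, X j ω) ∈ C})
      = ν {s} * P {ω | ∀ k, 1 ≤ k → k ≤ n →
            (lam + s) + (∑ j ∈ Finset.range k, X j ω) ∈ C} := by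
  have hsum : ∀ ω, X 0 ω = s → ∀ k : ℕ,
      lam + (∑ j ∈ Finset.range (k + 1), X j ω)
        = (lam + s) + (∑ j ∈ Finset.range k, X (1 + j) ω) := by
    intro ω hX k
    rw [Finset.sum_range_succ' (fun j => X j ω) k, hX]
    have : ∑ j ∈ Finset.range k, X (j + 1) ω = ∑ j ∈ Finset.range k, X (1 + j) ω :=
      Finset.sum_congr rfl fun j _ => by rw [Nat.add_comm]
    rw [this]; abel
  have e1 : {ω | X 0 ω = s} ∩
      {ω | ∀ k, 1 ≤ k → k ≤ n + 1 → lam + (∑ j ∈ Finset.range k, X j ω) ∈ C}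
      = {ω | X 0 ω = s} ∩
        {ω | ∀ k, 1 ≤ k → k ≤ n → (lam + s) + (∑ j ∈ Finset.range k, X (1 + j) ω) ∈ C} := by
    ext ω
    simp only [Set.mem_inter_iff, Set.mem_setOf_eq]
    constructor
    · rintro ⟨hX, hA⟩
      refine ⟨hX, fun k h1 h2 => ?_⟩
      rw [← hsum ω hX k]
      exact hA (k + 1) (by omega) (by omega)
    · rintro ⟨hX, hB⟩
      refine ⟨hX, fun k h1 h2 => ?_⟩
      obtain ⟨k', rfl⟩ : ∃ k', k = k' + 1 := ⟨k - 1, by omega⟩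
      rcases Nat.eq_zero_or_pos k' with hk' | hk'
      · subst hk'
        rw [Finset.sum_range_one, hX]
        exact h
      · rw [hsum ω hX k']
        exact hB k' (by omega) (by omega)
  rw [e1]
  have e2 : {ω | X 0 ω = s} ∩
        {ω | ∀ k, 1 ≤ k → k ≤ n → (lam + s) + (∑ j ∈ Finset.range k, X (1 + j) ω) ∈ C}
      ∩ (⋂ j, X j ⁻¹' (S : Set E))
      = (X 0 ⁻¹' {s} ∩ (fun ω (i : Fin n) => X (1 + i) ω) ⁻¹' PSetA S C (lam + s) n)
      ∩ (⋂ j, X j ⁻¹' (S : Set E)) := by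
    rw [preimage_PSetA S C X 1 n (lam + s)]
    have h3 := A_inter_good S C X 1 n (lam + s)
    have hX0 : {ω | X 0 ω = s} = X 0 ⁻¹' {s} := by ext ω; simp
    rw [Set.inter_assoc, h3, hX0, Set.inter_assoc]
  rw [helper_measure P (good_null P ν S X hXmeas hXdist hνS) e2]
  rw [(aux_indep P X hXmeas hXindep n).measure_inter_preimage_eq_mul {s} (PSetA S C (lam + s) n)
    (measurableSet_singleton s) (PSetA_measurable S C (lam + s) n)]
  congr 1
  · rw [← hXdist 0, Measure.map_apply (hXmeas 0) (measurableSet_singleton s)]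
  · have hL0 := L_A_eq P ν S C X hXmeas hXindep hXdist hνS 0 n (lam + s)
    simp only [zero_add] at hL0
    rw [← Measure.map_apply (measurable_pi_lambda _ fun i => hXmeas _)
        (PSetA_measurable S C (lam + s) n),
      aux_law P ν X hXmeas hXindep hXdist 1 n, ← hL0]

lemma L_step_neg (lam s : E) (n : ℕ) (h : lam + s ∉ C) :
    P ({ω | X 0 ω = s} ∩
        {ω | ∀ k, 1 ≤ k → k ≤ n + 1 → lam + (∑ j ∈ Finset.range k, X j ω) ∈ C}) = 0 := by
  have e : {ω | X 0 ω = s} ∩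
      {ω | ∀ k, 1 ≤ k → k ≤ n + 1 → lam + (∑ j ∈ Finset.range k, X j ω) ∈ C} = ∅ := by
    ext ω
    simp only [Set.mem_inter_iff, Set.mem_setOf_eq, Set.mem_empty_iff_false, iff_false, not_and]
    intro hX hA
    exact h (by simpa [Finset.sum_range_one, hX] using hA 1 le_rfl (by omega))
  rw [e, measure_empty]

lemma L_decomp (hXmeas : ∀ k, Measurable (X k))
    (hXindep : iIndepFun X P)
    (hXdist : ∀ k, Measure.map (X k) P = ν) (hνS : ν (S : Set E) = 1)
    (lam : E) (m : ℕ) :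
    P {ω | ∀ k, 1 ≤ k → k ≤ m → lam + (∑ j ∈ Finset.range k, X j ω) ∈ C}
      = ∑ s ∈ S, P ({ω | X 0 ω = s} ∩
          {ω | ∀ k, 1 ≤ k → k ≤ m → lam + (∑ j ∈ Finset.range k, X j ω) ∈ C}) := by
  classical
  set U : Set Ω := (fun ω (i : Fin m) => X (0 + i) ω) ⁻¹' PSetA S C lam m with hU
  have hUmeas : MeasurableSet U :=
    (measurable_pi_lambda _ fun i => hXmeas _) (PSetA_measurable S C lam m)
  have hGnull := good_null P ν S X hXmeas hXdist hνS
  -- P A = P U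
  have h1 : P {ω | ∀ k, 1 ≤ k → k ≤ m → lam + (∑ j ∈ Finset.range k, X j ω) ∈ C} = P U := by
    have hA := A_inter_good S C X 0 m lam
    simp only [zero_add] at hA
    have hP := preimage_PSetA S C X 0 m lam
    simp only [zero_add] at hP
    refine helper_measure P hGnull ?_
    rw [hU]
    have hP' : (fun ω (i : Fin m) => X (0 + i) ω) ⁻¹' PSetA S C lam m
        = {ω | ∀ k, 1 ≤ k → k ≤ m → (∑ j ∈ Finset.range k, X j ω) ∈ EsetA S C lam} := by
      rw [preimage_PSetA S C X 0 m lam]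
      simp only [zero_add]
    rw [hP', hA]
  rw [h1]
  -- P U = P (U ∩ X₀⁻¹ S)
  have hG0 : P (X 0 ⁻¹' (S : Set E))ᶜ = 0 := by
    rw [← Set.preimage_compl, ← Measure.map_apply (hXmeas 0)
      S.finite_toSet.measurableSet.compl, hXdist 0,
      measure_compl S.finite_toSet.measurableSet (measure_ne_top _ _), hνS, measure_univ]
    simp
  have h2 : P U = P (U ∩ X 0 ⁻¹' (S : Set E)) := by
    refine helper_measure P hG0 ?_
    rw [Set.inter_assoc, Set.inter_self]
  rw [h2]
  -- decompose
  have h3 : U ∩ X 0 ⁻¹' (S : Set E) = ⋃ s ∈ S, U ∩ X 0 ⁻¹' {s} := by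
    ext ω
    simp only [Set.mem_inter_iff, Set.mem_preimage, Set.mem_iUnion, Set.mem_singleton_iff,
      Finset.mem_coe]
    constructor
    · rintro ⟨hu, hs⟩; exact ⟨X 0 ω, hs, hu, rfl⟩
    · rintro ⟨s, hs, hu, he⟩; exact ⟨hu, he ▸ hs⟩
  rw [h3]
  rw [measure_biUnion_finset ?hd fun s _ => hUmeas.inter ((hXmeas 0) (measurableSet_singleton s))]
  case hd =>
    intro s hs t ht hst
    simp only [Function.onFun, Set.disjoint_left]
    rintro ω ⟨-, h1'⟩ ⟨-, h2'⟩
    exact hst (by rw [← h1', ← h2'])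
  apply Finset.sum_congr rfl
  intro s _
  refine helper_measure P hGnull ?_
  have hA := A_inter_good S C X 0 m lam
  simp only [zero_add] at hA
  have hP' : U = {ω | ∀ k, 1 ≤ k → k ≤ m → (∑ j ∈ Finset.range k, X j ω) ∈ EsetA S C lam} := by
    rw [hU, preimage_PSetA S C X 0 m lam]
    simp only [zero_add]
  have hX0 : X 0 ⁻¹' {s} = {ω | X 0 ω = s} := by ext ω; simp
  rw [hP', hX0]
  ext ω
  constructor
  · rintro ⟨⟨hu, hx⟩, hg⟩
    have hh : ω ∈ {ω | ∀ (k : ℕ), 1 ≤ k → k ≤ m → (∑ x ∈ Finset.range k, X x ω) ∈ EsetA S C lam}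
        ∩ ⋂ j, X j ⁻¹' (S : Set E) := ⟨hu, hg⟩
    rw [← hA] at hh
    exact ⟨⟨hx, hh.1⟩, hg⟩
  · rintro ⟨⟨hx, ha⟩, hg⟩
    have hh : ω ∈ {ω | ∀ (k : ℕ), 1 ≤ k → k ≤ m → lam + (∑ x ∈ Finset.range k, X x ω) ∈ C}
        ∩ ⋂ j, X j ⁻¹' (S : Set E) := ⟨ha, hg⟩
    rw [hA] at hh
    exact ⟨⟨hh.1, hx⟩, hg⟩

noncomputable def psiA (P : Measure Ω) (X : ℕ → Ω → E) (C : Set E) (n : ℕ) (mu : E) : ℝ :=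
  (P {ω | ∀ k, 1 ≤ k → k ≤ n → mu + (∑ j ∈ Finset.range k, X j ω) ∈ C}).toReal

lemma psiA_step (hXmeas : ∀ k, Measurable (X k))
    (hXindep : iIndepFun X P)
    (hXdist : ∀ k, Measure.map (X k) P = ν) (hνS : ν (S : Set E) = 1)
    (lam s : E) (n : ℕ) (h : lam + s ∈ C) :
    (P ({ω | X 0 ω = s} ∩
        {ω | ∀ k, 1 ≤ k → k ≤ n + 1 → lam + (∑ j ∈ Finset.range k, X j ω) ∈ C})).toReal
      = (ν {s}).toReal * psiA P X C n (lam + s) := by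
  rw [L_step_pos P ν S C X hXmeas hXindep hXdist hνS lam s n h, ENNReal.toReal_mul]
  rfl

lemma psiA_decomp (hXmeas : ∀ k, Measurable (X k))
    (hXindep : iIndepFun X P)
    (hXdist : ∀ k, Measure.map (X k) P = ν) (hνS : ν (S : Set E) = 1)
    (lam : E) (n : ℕ) :
    psiA P X C (n + 1) lam
      = ∑ s ∈ S, (ν {s}).toReal * C.indicator (psiA P X C n) (lam + s) := by
  rw [psiA, L_decomp P ν S C X hXmeas hXindep hXdist hνS lam (n + 1),
    ENNReal.toReal_sum (fun s _ => measure_ne_top _ _)]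
  refine Finset.sum_congr rfl fun s _ => ?_
  by_cases h : lam + s ∈ C
  · rw [Set.indicator_of_mem h,
      ← psiA_step P ν S C X hXmeas hXindep hXdist hνS lam s n h]
  · rw [Set.indicator_of_notMem h, L_step_neg P C X lam s n h]
    simp

end Aux



/-- under (i) the Denisov–Wachtel asymptotics `ψ_n(λ)·n^{κ₂} → κ₁ V(λ)` on a
countable step-closed set of states `Λ₀ ⊆ C̄` whose points are all reachable from `λ₀`
by paths staying in `C̄` with increments in `S`, and (ii) the existence of a positive
function `D₀` with `D₀(λ₀) = 1`, harmonic for the killed kernel and dominating in the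
sense `ψ_n(λ) ≤ D₀(λ)·ψ_n(λ₀)`, one has `ψ_n(λ)/ψ_n(λ₀) → D₀(λ)`, and the conditioned
transition probabilities converge:
`ℙ(λ + X₁ = Λ, τ_λ > n)/ℙ(τ_λ > n) → ν({Λ-λ})·D₀(Λ)/D₀(λ)`. -/
theorem stmt_9
    (D : ℕ) (hD : 1 ≤ D)
    (S : Finset (Fin D → ℝ)) (hSne : S.Nonempty)
    (ν : Measure (Fin D → ℝ)) [IsProbabilityMeasure ν]
    (hνpos : ∀ s ∈ S, 0 < ν {s}) (hνS : ν (S : Set (Fin D → ℝ)) = 1)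
    {Ω : Type*} [MeasurableSpace Ω] (P : Measure Ω) [IsProbabilityMeasure P]
    (X : ℕ → Ω → (Fin D → ℝ)) (hXmeas : ∀ k, Measurable (X k))
    (hXindep : iIndepFun X P)
    (hXdist : ∀ k, Measure.map (X k) P = ν)
    (C : Set (Fin D → ℝ)) (hCadd : ∀ x ∈ C, ∀ y ∈ C, x + y ∈ C)
    (Λ₀ : Set (Fin D → ℝ)) (hΛ₀sub : Λ₀ ⊆ C) (hΛ₀count : Λ₀.Countable)
    (hΛ₀closed : ∀ lam ∈ Λ₀, ∀ s ∈ S, lam + s ∈ C → lam + s ∈ Λ₀)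
    (lam₀ : Fin D → ℝ) (hlam₀ : lam₀ ∈ Λ₀)
    (hreach : ∀ lam ∈ Λ₀, ∃ n : ℕ, ∃ π : ℕ → (Fin D → ℝ),
        π 0 = lam₀ ∧ π n = lam ∧ (∀ k ≤ n, π k ∈ C) ∧ ∀ k < n, π (k + 1) - π k ∈ S)
    (κ₁ κ₂ : ℝ) (hκ₁ : 0 < κ₁) (hκ₂ : 0 < κ₂)
    (V : (Fin D → ℝ) → ℝ) (hV : ∀ lam ∈ Λ₀, 0 < V lam)
    (hasymp : ∀ lam ∈ Λ₀, Tendsto (fun n : ℕ =>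
        (P {ω | ∀ k, 1 ≤ k → k ≤ n →
            lam + (∑ j ∈ Finset.range k, X j ω) ∈ C}).toReal * (n : ℝ) ^ κ₂)
        atTop (nhds (κ₁ * V lam)))
    (D₀ : (Fin D → ℝ) → ℝ) (hD₀pos : ∀ lam ∈ Λ₀, 0 < D₀ lam)
    (hD₀base : D₀ lam₀ = 1)
    (hD₀harm : ∀ lam ∈ Λ₀,
        D₀ lam = ∑ s ∈ S, (ν {s}).toReal * C.indicator D₀ (lam + s))
    (hD₀dom : ∀ lam ∈ Λ₀, ∀ n : ℕ, 1 ≤ n →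
        (P {ω | ∀ k, 1 ≤ k → k ≤ n →
            lam + (∑ j ∈ Finset.range k, X j ω) ∈ C}).toReal
          ≤ D₀ lam * (P {ω | ∀ k, 1 ≤ k → k ≤ n →
              lam₀ + (∑ j ∈ Finset.range k, X j ω) ∈ C}).toReal) :
    (∀ lam ∈ Λ₀, Tendsto (fun n : ℕ =>
        (P {ω | ∀ k, 1 ≤ k → k ≤ n →
            lam + (∑ j ∈ Finset.range k, X j ω) ∈ C}).toReal
          / (P {ω | ∀ k, 1 ≤ k → k ≤ n →
              lam₀ + (∑ j ∈ Finset.range k, X j ω) ∈ C}).toReal)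
        atTop (nhds (D₀ lam)))
    ∧ ∀ lam ∈ Λ₀, ∀ Lam ∈ Λ₀, Lam - lam ∈ S →
        Tendsto (fun n : ℕ =>
          (P ({ω | lam + X 0 ω = Lam}
              ∩ {ω | ∀ k, 1 ≤ k → k ≤ n →
                  lam + (∑ j ∈ Finset.range k, X j ω) ∈ C})).toReal
            / (P {ω | ∀ k, 1 ≤ k → k ≤ n →
                lam + (∑ j ∈ Finset.range k, X j ω) ∈ C}).toReal)
          atTop (nhds ((ν {Lam - lam}).toReal * D₀ Lam / D₀ lam)) := by
  classical
  have hL : ∀ lam ∈ Λ₀, Tendsto (fun n : ℕ => psiA P X C n lam * (n:ℝ)^κ₂) atTop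
      (nhds (κ₁ * V lam)) := fun lam hl => hasymp lam hl
  have hLpos : ∀ lam ∈ Λ₀, 0 < κ₁ * V lam := fun lam hl => mul_pos hκ₁ (hV lam hl)
  have hLlam₀ : 0 < κ₁ * V lam₀ := hLpos lam₀ hlam₀
  have hstep : ∀ (lam) (n : ℕ), psiA P X C (n+1) lam
      = ∑ s ∈ S, (ν {s}).toReal * C.indicator (psiA P X C n) (lam + s) :=
    fun lam n => psiA_decomp P ν S C X hXmeas hXindep hXdist hνS lam n
  -- ratio limits
  have hrat : Tendsto (fun m : ℕ => ((m:ℝ)+1)^κ₂ / ((m:ℝ))^κ₂) atTop (nhds 1) := by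
    have h1 : Tendsto (fun m : ℕ => ((m:ℝ)+1)/(m:ℝ)) atTop (nhds 1) := by
      have h2 : Tendsto (fun m : ℕ => 1 + (m:ℝ)⁻¹) atTop (nhds 1) := by
        have := tendsto_inv_atTop_nhds_zero_nat (𝕜 := ℝ)
        simpa using tendsto_const_nhds.add this
      refine h2.congr' ?_
      filter_upwards [eventually_ge_atTop 1] with m hm
      have hm' : (m:ℝ) ≠ 0 := by
        have : (0:ℝ) < (m:ℝ) := by exact_mod_cast hm
        exact this.ne'
      field_simp
    have hc : ContinuousAt (fun x : ℝ => x ^ κ₂) 1 :=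
      Real.continuousAt_rpow_const 1 κ₂ (Or.inl one_ne_zero)
    have h3 := hc.tendsto.comp h1
    rw [Real.one_rpow] at h3
    refine h3.congr' ?_
    filter_upwards [eventually_ge_atTop 1] with m hm
    simp only [Function.comp]
    rw [Real.div_rpow (by positivity) (by positivity)]
  have hrat_inv : Tendsto (fun m : ℕ => ((m:ℝ))^κ₂ / ((m:ℝ)+1)^κ₂) atTop (nhds 1) := by
    have h := hrat.inv₀ one_ne_zero
    rw [inv_one] at h
    refine h.congr fun m => ?_
    rw [inv_div]
  -- harmonicity of the limit
  have hVharm : ∀ lam ∈ Λ₀, κ₁ * V lam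
      = ∑ s ∈ S, (ν {s}).toReal * C.indicator (fun mu => κ₁ * V mu) (lam + s) := by
    intro lam hlam
    have ta : Tendsto (fun n : ℕ => psiA P X C (n+1) lam * (n:ℝ)^κ₂) atTop
        (nhds (κ₁ * V lam)) := by
      have base := (hL lam hlam).comp (tendsto_add_atTop_nat 1)
      have base1 : Tendsto (fun n : ℕ => psiA P X C (n+1) lam * ((n:ℝ)+1)^κ₂) atTop
          (nhds (κ₁ * V lam)) := by
        refine base.congr fun n => ?_
        simp only [Function.comp]
        push_cast
        ring_nf
      have base2 := base1.mul hrat_inv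
      rw [mul_one] at base2
      refine base2.congr fun n => ?_
      have hne : ((n:ℝ)+1)^κ₂ ≠ 0 := (Real.rpow_pos_of_pos (by positivity) _).ne'
      field_simp
    have tb : Tendsto (fun n : ℕ => psiA P X C (n+1) lam * (n:ℝ)^κ₂) atTop
        (nhds (∑ s ∈ S, (ν {s}).toReal * C.indicator (fun mu => κ₁ * V mu) (lam + s))) := by
      have heq : ∀ n : ℕ, psiA P X C (n+1) lam * (n:ℝ)^κ₂
          = ∑ s ∈ S, (ν {s}).toReal * (C.indicator (psiA P X C n) (lam + s) * (n:ℝ)^κ₂) := by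
        intro n
        rw [hstep lam n, Finset.sum_mul]
        exact Finset.sum_congr rfl fun s _ => by ring
      rw [funext heq]
      apply tendsto_finset_sum
      intro s hs
      by_cases hc : lam + s ∈ C
      · have hmem := hΛ₀closed lam hlam s hs hc
        have h1 := (hL _ hmem).const_mul ((ν {s}).toReal)
        simp only [Set.indicator_of_mem hc]
        exact h1
      · simp only [Set.indicator_of_notMem hc, mul_zero, zero_mul]
        exact tendsto_const_nhds
    exact tendsto_nhds_unique ta tb
  -- dominance in the limit
  have hdom : ∀ lam ∈ Λ₀, κ₁ * V lam ≤ D₀ lam * (κ₁ * V lam₀) := by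
    intro lam hlam
    refine le_of_tendsto_of_tendsto (hL lam hlam) ((hL lam₀ hlam₀).const_mul (D₀ lam)) ?_
    filter_upwards [eventually_ge_atTop 1] with n hn
    have h1 := hD₀dom lam hlam n hn
    calc psiA P X C n lam * (n:ℝ)^κ₂
        ≤ (D₀ lam * psiA P X C n lam₀) * (n:ℝ)^κ₂ :=
          mul_le_mul_of_nonneg_right h1 (Real.rpow_nonneg (Nat.cast_nonneg n) κ₂)
      _ = D₀ lam * (psiA P X C n lam₀ * (n:ℝ)^κ₂) := by ring
  have hWle : ∀ lam ∈ Λ₀, (κ₁ * V lam) / (κ₁ * V lam₀) ≤ D₀ lam := by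
    intro lam hlam
    exact (div_le_iff₀ hLlam₀).mpr (hdom lam hlam)
  have hWharm : ∀ lam ∈ Λ₀, (κ₁ * V lam) / (κ₁ * V lam₀)
      = ∑ s ∈ S, (ν {s}).toReal *
          C.indicator (fun mu => (κ₁ * V mu) / (κ₁ * V lam₀)) (lam + s) := by
    intro lam hlam
    rw [hVharm lam hlam, Finset.sum_div]
    refine Finset.sum_congr rfl fun s hs => ?_
    rw [mul_div_assoc]
    congr 1
    by_cases hc : lam + s ∈ C
    · rw [Set.indicator_of_mem hc, Set.indicator_of_mem hc]
    · rw [Set.indicator_of_notMem hc, Set.indicator_of_notMem hc, zero_div]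
  have hW₀ : (κ₁ * V lam₀) / (κ₁ * V lam₀) = 1 := div_self hLlam₀.ne'
  -- propagation of equality along steps
  have hprop : ∀ mu ∈ Λ₀, D₀ mu = (κ₁ * V mu) / (κ₁ * V lam₀) → ∀ s ∈ S, mu + s ∈ C →
      D₀ (mu + s) = (κ₁ * V (mu + s)) / (κ₁ * V lam₀) := by
    intro mu hmu heq s hs hc
    have h1 := hD₀harm mu hmu
    have h2 := hWharm mu hmu
    have hsum : ∑ t ∈ S, (ν {t}).toReal *
        (C.indicator D₀ (mu + t)
          - C.indicator (fun x => (κ₁ * V x) / (κ₁ * V lam₀)) (mu + t)) = 0 := by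
      have e : ∀ t ∈ S, (ν {t}).toReal *
          (C.indicator D₀ (mu + t)
            - C.indicator (fun x => (κ₁ * V x) / (κ₁ * V lam₀)) (mu + t))
          = (ν {t}).toReal * C.indicator D₀ (mu + t)
            - (ν {t}).toReal
              * C.indicator (fun x => (κ₁ * V x) / (κ₁ * V lam₀)) (mu + t) :=
        fun t _ => by ring
      rw [Finset.sum_congr rfl e, Finset.sum_sub_distrib, ← h1, ← h2, heq, sub_self]
    have hnn : ∀ t ∈ S, 0 ≤ (ν {t}).toReal *
        (C.indicator D₀ (mu + t)
          - C.indicator (fun x => (κ₁ * V x) / (κ₁ * V lam₀)) (mu + t)) := by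
      intro t ht
      apply mul_nonneg ENNReal.toReal_nonneg
      by_cases hct : mu + t ∈ C
      · rw [Set.indicator_of_mem hct, Set.indicator_of_mem hct, sub_nonneg]
        exact hWle _ (hΛ₀closed mu hmu t ht hct)
      · rw [Set.indicator_of_notMem hct, Set.indicator_of_notMem hct, sub_self]
    have hz := (Finset.sum_eq_zero_iff_of_nonneg hnn).mp hsum s hs
    have hν : 0 < (ν {s}).toReal := ENNReal.toReal_pos (hνpos s hs).ne' (measure_ne_top _ _)
    have hz2 : C.indicator D₀ (mu + s)
        - C.indicator (fun x => (κ₁ * V x) / (κ₁ * V lam₀)) (mu + s) = 0 := by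
      rcases mul_eq_zero.mp hz with h | h
      · exact absurd h hν.ne'
      · exact h
    rw [Set.indicator_of_mem hc, Set.indicator_of_mem hc] at hz2
    linarith
  have hzero : ∀ lam ∈ Λ₀, D₀ lam = (κ₁ * V lam) / (κ₁ * V lam₀) := by
    intro lam hlam
    obtain ⟨n, π, h0, hn, hCm, hSm⟩ := hreach lam hlam
    have key : ∀ k, k ≤ n → π k ∈ Λ₀ ∧ D₀ (π k) = (κ₁ * V (π k)) / (κ₁ * V lam₀) := by
      intro k
      induction k with
      | zero => intro _; rw [h0]; exact ⟨hlam₀, by rw [hD₀base, hW₀]⟩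
      | succ k ih =>
        intro hk
        obtain ⟨hmem, heq⟩ := ih (by omega)
        have hs := hSm k (by omega)
        have hC := hCm (k+1) hk
        have hrw : π k + (π (k+1) - π k) = π (k+1) := by abel
        have hC' : π k + (π (k+1) - π k) ∈ C := by rw [hrw]; exact hC
        have hmem' := hΛ₀closed (π k) hmem _ hs hC'
        have heq' := hprop (π k) hmem heq _ hs hC'
        rw [hrw] at hmem' heq'
        exact ⟨hmem', heq'⟩
      
    have hfin := (key n le_rfl).2
    rwa [hn] at hfin
  -- part 1
  have part1 : ∀ lam ∈ Λ₀, Tendsto (fun n : ℕ => psiA P X C n lam / psiA P X C n lam₀)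
      atTop (nhds (D₀ lam)) := by
    intro lam hlam
    have hdiv := (hL lam hlam).div (hL lam₀ hlam₀) hLlam₀.ne'
    have heq : (fun n : ℕ => psiA P X C n lam * (n:ℝ)^κ₂
        / (psiA P X C n lam₀ * (n:ℝ)^κ₂))
        =ᶠ[atTop] (fun n : ℕ => psiA P X C n lam / psiA P X C n lam₀) := by
      filter_upwards [eventually_ge_atTop 1] with n hn
      have hpos : (0:ℝ) < (n:ℝ) := by exact_mod_cast hn
      exact mul_div_mul_right _ _ (Real.rpow_pos_of_pos hpos κ₂).ne'
    rw [hzero lam hlam]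
    exact hdiv.congr' heq
  refine ⟨part1, ?_⟩
  -- part 2
  intro lam hlam Lam hLam hsS
  have hadd : lam + (Lam - lam) = Lam := by abel
  have hLamC : lam + (Lam - lam) ∈ C := by rw [hadd]; exact hΛ₀sub hLam
  have hnum : ∀ n : ℕ, 1 ≤ n →
      (P ({ω | lam + X 0 ω = Lam} ∩ {ω | ∀ k, 1 ≤ k → k ≤ n →
          lam + (∑ j ∈ Finset.range k, X j ω) ∈ C})).toReal
        = (ν {Lam - lam}).toReal * psiA P X C (n-1) Lam := by
    intro n hn
    obtain ⟨m, rfl⟩ : ∃ m, n = m + 1 := ⟨n - 1, by omega⟩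
    have hset : {ω : Ω | lam + X 0 ω = Lam} = {ω | X 0 ω = Lam - lam} := by
      ext ω
      constructor
      · intro h; exact eq_sub_of_add_eq' h
      · intro h
        show lam + X 0 ω = Lam
        rw [h, hadd]
    rw [hset, psiA_step P ν S C X hXmeas hXindep hXdist hνS lam (Lam - lam) m hLamC, hadd]
    norm_num
  have hFlim : Tendsto (fun n : ℕ => psiA P X C (n-1) Lam * (((n-1:ℕ)):ℝ)^κ₂) atTop
      (nhds (κ₁ * V Lam)) := (hL Lam hLam).comp (tendsto_sub_atTop_nat 1)
  have hGlim := hL lam hlam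
  have hLne : κ₁ * V lam ≠ 0 := (hLpos lam hlam).ne'
  have hHlim : Tendsto (fun n : ℕ => ((n:ℝ))^κ₂ / (((n-1:ℕ)):ℝ)^κ₂) atTop (nhds 1) := by
    have h := hrat.comp (tendsto_sub_atTop_nat 1)
    refine h.congr' ?_
    filter_upwards [eventually_ge_atTop 1] with n hn
    simp only [Function.comp]
    have hc : ((n-1:ℕ):ℝ) + 1 = (n:ℝ) := by
      rw [← Nat.cast_add_one, Nat.sub_add_cancel hn]
    rw [hc]
  have hmain : Tendsto (fun n : ℕ => (ν {Lam - lam}).toReal *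
      ((psiA P X C (n-1) Lam * ((n-1:ℕ):ℝ)^κ₂) / (psiA P X C n lam * (n:ℝ)^κ₂)
        * ((n:ℝ)^κ₂ / ((n-1:ℕ):ℝ)^κ₂))) atTop
      (nhds ((ν {Lam - lam}).toReal * ((κ₁ * V Lam) / (κ₁ * V lam) * 1))) :=
    Tendsto.const_mul _ ((hFlim.div hGlim hLne).mul hHlim)
  have hvals : (ν {Lam - lam}).toReal * ((κ₁ * V Lam) / (κ₁ * V lam) * 1)
      = (ν {Lam - lam}).toReal * D₀ Lam / D₀ lam := by
    have hdd : D₀ Lam / D₀ lam = κ₁ * V Lam / (κ₁ * V lam) := by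
      rw [hzero Lam hLam, hzero lam hlam, div_div_div_cancel_right₀]
      exact hLlam₀.ne'
    rw [mul_one, ← hdd, mul_div_assoc]
  rw [hvals] at hmain
  refine hmain.congr' ?_
  filter_upwards [eventually_ge_atTop 2] with n hn
  have hn1 : 1 ≤ n := by omega
  have hpos : (0:ℝ) < (n:ℝ) := by exact_mod_cast hn1
  have hpos' : (0:ℝ) < ((n-1:ℕ):ℝ) := by
    have : 1 ≤ n - 1 := by omega
    exact_mod_cast Nat.lt_of_lt_of_le Nat.zero_lt_one this
  have c1 : (0:ℝ) < (n:ℝ)^κ₂ := Real.rpow_pos_of_pos hpos κ₂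
  have c2 : (0:ℝ) < ((n-1:ℕ):ℝ)^κ₂ := Real.rpow_pos_of_pos hpos' κ₂
  have key : psiA P X C (n-1) Lam * ((n-1:ℕ):ℝ)^κ₂ / (psiA P X C n lam * (n:ℝ)^κ₂)
      * ((n:ℝ)^κ₂ / ((n-1:ℕ):ℝ)^κ₂) = psiA P X C (n-1) Lam / psiA P X C n lam := by
    rw [div_mul_div_comm]
    have e1 : psiA P X C (n-1) Lam * ((n-1:ℕ):ℝ)^κ₂ * ((n:ℝ)^κ₂)
        = psiA P X C (n-1) Lam * (((n-1:ℕ):ℝ)^κ₂ * (n:ℝ)^κ₂) := by ring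
    have e2 : psiA P X C n lam * (n:ℝ)^κ₂ * (((n-1:ℕ):ℝ)^κ₂)
        = psiA P X C n lam * (((n-1:ℕ):ℝ)^κ₂ * (n:ℝ)^κ₂) := by ring
    rw [e1, e2, mul_div_mul_right _ _ (mul_pos c2 c1).ne']
  show (ν {Lam - lam}).toReal * (_ * _) = _
  rw [key, hnum n hn1, mul_div_assoc]
  rfl
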